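/- Consider any broadcasted party-list election E = (N, C, k, l, A, L) with parties P_1, …, P_g whose popularities are strictly decreasing (n_1 > n_2 > … > n_g) and in which every party has at least l candidates (|P_i| ≥ l for all i). Then every winning committee W ∈ LV(E) has CC-score s_CC(A, W) = Σ_{i=1}^{min(⌈k/l⌉, g)} n_i. -/

import Mathlib

open Finset

/-- An election `E = (N, C, k, l, A, L)`: voters form the finite type `V`,
candidates the finite type `C`, `k` is the committee size, `l` the ballot limit,
`A i` is the approval set of voter `i` and `L i` their ballot. -/
structure Election (V C : Type*) [Fintype V] [DecidableEq V] [Fintype C] [DecidableEq C] where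
  k : ℕ
  l : ℕ
  A : V → Finset C
  L : V → Finset C
  k_le_card : k ≤ Fintype.card C
  one_le_l : 1 ≤ l
  l_le_k : l ≤ k
  ballot_card : ∀ i, (L i).card = l
  ballot_sub_approval : ∀ i, l ≤ (A i).card → L i ⊆ A i
  approval_ssub_ballot : ∀ i, (A i).card < l → A i ⊂ L i

variable {V C : Type*} [Fintype V] [DecidableEq V] [Fintype C] [DecidableEq C]

/-- The LV-score of a candidate: the number of voters whose ballot contains it. -/
def sLVc (E : Election V C) (c : C) : ℕ := (univ.filter fun i => c ∈ E.L i).card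

/-- The AV-score of a candidate: the number of voters approving it. -/
def sAVc (E : Election V C) (c : C) : ℕ := (univ.filter fun i => c ∈ E.A i).card

/-- The LV-score of a committee. -/
def sLV (E : Election V C) (W : Finset C) : ℕ := ∑ c ∈ W, sLVc E c

/-- The AV-score of a committee. -/
def sAV (E : Election V C) (W : Finset C) : ℕ := ∑ c ∈ W, sAVc E c

/-- The winning committees of Limited Voting: size-`k` committees maximizing the LV-score. -/
def LVwin (E : Election V C) : Set (Finset C) :=
  {W | W.card = E.k ∧ ∀ W' : Finset C, W'.card = E.k → sLV E W' ≤ sLV E W}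

/-- The winning committees of Approval Voting: size-`k` committees maximizing the AV-score. -/
def AVwin (E : Election V C) : Set (Finset C) :=
  {W | W.card = E.k ∧ ∀ W' : Finset C, W'.card = E.k → sAV E W' ≤ sAV E W}

/-- The Chamberlin–Courant score of a committee: the number of represented voters. -/
def sCC (E : Election V C) (W : Finset C) : ℕ :=
  (univ.filter fun i => (W ∩ E.A i).Nonempty).card

/-- `A` is a party-list profile: approval sets are nonempty and pairwise equal or disjoint. -/
def PartyList (E : Election V C) : Prop :=
  (∀ i, (E.A i).Nonempty) ∧ ∀ i j : V, E.A i = E.A j ∨ E.A i ∩ E.A j = ∅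

/-- `E` is consistent with some broadcasting (linear) order on candidates, encoded by an
injective priority function `f` (`f c < f c'` meaning `c ≻ c'`). -/
def Broadcasted (E : Election V C) : Prop :=
  ∃ f : C → ℕ, Function.Injective f ∧
    ∀ (i : V) (c c' : C), c ∈ E.A i → c' ∈ E.A i → c ∈ E.L i → c' ∉ E.L i → f c < f c'

/-- The number of voters of party `Pj`. -/
def nParty (E : Election V C) (Pj : Finset C) : ℕ := (univ.filter fun i => E.A i = Pj).card

lemma card_filter_fin_lt (g M : ℕ) (h : M ≤ g) :
    (univ.filter fun j : Fin g => (j:ℕ) < M).card = M := by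
  have he : (univ.filter fun j : Fin g => (j:ℕ) < M) =
      (Finset.range M).attachFin (fun m hm => lt_of_lt_of_le (mem_range.mp hm) h) := by
    ext j
    simp [Finset.mem_attachFin]
  rw [he, Finset.card_attachFin, Finset.card_range]

lemma ceil_facts (k l : ℕ) (hl : 0 < l) (hk : 0 < k) :
    (∀ j, j < (k + l - 1)/l → j * l < k) ∧ k ≤ ((k+l-1)/l) * l := by
  set m := (k + l - 1)/l with hm
  have hdm := Nat.div_add_mod (k + l - 1) l
  have hmod := Nat.mod_lt (k+l-1) hl
  constructor
  · intro j hj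
    have h1 : l * (j+1) ≤ l * m := Nat.mul_le_mul_left l hj
    rw [Nat.mul_succ] at h1
    rw [Nat.mul_comm j l]
    generalize l * j = u at h1 ⊢
    generalize l * m = t at h1 hdm
    omega
  · rw [Nat.mul_comm]
    generalize l * m = t at hdm ⊢
    omega

lemma swap_lose (E : Election V C) (W : Finset C) (hW : W.card = E.k)
    (hmax : ∀ W' : Finset C, W'.card = E.k → sLV E W' ≤ sLV E W)
    {c b : C} (hc : c ∈ W) (hb : b ∉ W) (hcb : sLVc E c < sLVc E b) : False := by
  have hk1 : 1 ≤ E.k := le_trans E.one_le_l E.l_le_k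
  set W' := insert b (W.erase c) with hW'
  have hbe : b ∉ W.erase c := fun h => hb (mem_of_mem_erase h)
  have hcard : W'.card = E.k := by
    rw [hW', card_insert_of_notMem hbe, card_erase_of_mem hc, hW]; omega
  have h1 : sLV E W' = sLVc E b + ∑ x ∈ W.erase c, sLVc E x := by
    rw [hW', sLV, sum_insert hbe]
  have h2 : sLV E W = sLVc E c + ∑ x ∈ W.erase c, sLVc E x := by
    rw [sLV, ← Finset.add_sum_erase _ _ hc]
  have := hmax W' hcard
  omega

/-- In a broadcasted party-list election with strictly decreasing party
popularities where every party has at least `l` candidates, every LV-winning committee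
`W` has `s_CC(A, W) = Σ_{i=1}^{min(⌈k/l⌉, g)} n_i`. -/
theorem stmt1 (E : Election V C) (hPL : PartyList E) (hB : Broadcasted E)
    (g : ℕ) (P : Fin g → Finset C)
    (hPall : ∀ i : V, ∃ j, E.A i = P j)
    (hPrep : ∀ j, ∃ i : V, E.A i = P j)
    (hanti : ∀ j j' : Fin g, j < j' → nParty E (P j') < nParty E (P j))
    (hPl : ∀ j, E.l ≤ (P j).card) :
    ∀ W ∈ LVwin E,
      sCC E W = ∑ j ∈ univ.filter
        (fun j : Fin g => (j : ℕ) < min ((E.k + E.l - 1) / E.l) g), nParty E (P j) := by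
  intro W hW
  obtain ⟨hWcard, hWmax⟩ := hW
  have hl0 : 0 < E.l := E.one_le_l
  have hk0 : 0 < E.k := lt_of_lt_of_le hl0 E.l_le_k
  have Pinj : Function.Injective P := by
    intro j j' h
    by_contra hne
    rcases lt_or_gt_of_ne hne with hlt | hlt
    · have := hanti j j' hlt; rw [h] at this; exact lt_irrefl _ this
    · have := hanti j' j hlt; rw [h] at this; exact lt_irrefl _ this
  have Pdisj : ∀ j j' : Fin g, j ≠ j' → ∀ c, c ∈ P j → c ∈ P j' → False := by
    intro j j' hne c hc hc'
    obtain ⟨i, hi⟩ := hPrep j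
    obtain ⟨i', hi'⟩ := hPrep j'
    rcases hPL.2 i i' with h | h
    · exact hne (Pinj (by rw [← hi, ← hi', h]))
    · have hmem : c ∈ E.A i ∩ E.A i' := by
        rw [hi, hi']; exact mem_inter.mpr ⟨hc, hc'⟩
      rw [h] at hmem; exact absurd hmem (notMem_empty c)
  have hLsub : ∀ i : V, E.L i ⊆ E.A i := by
    intro i
    obtain ⟨j, hj⟩ := hPall i
    exact E.ballot_sub_approval i (by rw [hj]; exact hPl j)
  have hLeq : ∀ i i' : V, E.A i = E.A i' → E.L i = E.L i' := by
    intro i i' hA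
    by_contra hne
    have hcard : (E.L i).card = (E.L i').card := by rw [E.ballot_card, E.ballot_card]
    obtain ⟨c, hc, hc'⟩ : ∃ c, c ∈ E.L i ∧ c ∉ E.L i' := by
      by_contra hno
      push_neg at hno
      exact hne (Finset.eq_of_subset_of_card_le (fun x hx => hno x hx) (le_of_eq hcard.symm))
    obtain ⟨d, hd, hd'⟩ : ∃ d, d ∈ E.L i' ∧ d ∉ E.L i := by
      by_contra hno
      push_neg at hno
      exact hne ((Finset.eq_of_subset_of_card_le (fun x hx => hno x hx) (le_of_eq hcard)).symm)
    obtain ⟨f, hfinj, hf⟩ := hB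
    have h1 : f c < f d := hf i c d (hLsub i hc) (by rw [hA]; exact hLsub i' hd) hc hd'
    have h2 : f d < f c := hf i' d c (hLsub i' hd) (by rw [← hA]; exact hLsub i hc) hd hc'
    omega
  choose rep hrep using hPrep
  choose pt hpt using hPall
  set B : Fin g → Finset C := fun j => E.L (rep j) with hBdef
  have hBsub : ∀ j, B j ⊆ P j := fun j => by
    rw [hBdef]; intro x hx; rw [← hrep j]; exact hLsub (rep j) hx
  have hBcard : ∀ j, (B j).card = E.l := fun j => E.ballot_card (rep j)
  have hLB : ∀ i : V, E.L i = B (pt i) := fun i => hLeq i (rep (pt i)) (by rw [hpt i, hrep])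
  have hBdisj : ∀ j j' : Fin g, j ≠ j' → ∀ c, c ∈ B j → c ∈ B j' → False :=
    fun j j' hne c hc hc' => Pdisj j j' hne c (hBsub j hc) (hBsub j' hc')
  have hscore : ∀ (j : Fin g) (c : C), c ∈ B j → sLVc E c = nParty E (P j) := by
    intro j c hc
    unfold sLVc nParty
    congr 1
    ext i
    simp only [mem_filter, mem_univ, true_and]
    constructor
    · intro hci
      rw [hLB i] at hci
      have hpj : pt i = j := by
        by_contra hne
        exact hBdisj _ _ hne c hci hc
      rw [hpt i, hpj]
    · intro hAi
      have hpj : pt i = j := Pinj (by rw [← hpt i, hAi])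
      rw [hLB i, hpj]; exact hc
  have hscore0 : ∀ c : C, (∀ j, c ∉ B j) → sLVc E c = 0 := by
    intro c h
    unfold sLVc
    rw [Finset.card_eq_zero]
    ext i
    simp only [mem_filter, mem_univ, true_and, notMem_empty, iff_false]
    intro hci
    rw [hLB i] at hci
    exact h _ hci
  have hn1 : ∀ j, 1 ≤ nParty E (P j) := by
    intro j
    have : rep j ∈ univ.filter fun i => E.A i = P j := mem_filter.mpr ⟨mem_univ _, hrep j⟩
    exact card_pos.mpr ⟨_, this⟩
  set m := (E.k + E.l - 1) / E.l with hm
  set M := min m g with hM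
  have hcf := ceil_facts E.k E.l hl0 hk0
  have hcardU : ∀ M' : ℕ, M' ≤ g →
      (((univ.filter fun j : Fin g => (j:ℕ) < M').biUnion B).card = M' * E.l) := by
    intro M' hM'
    rw [Finset.card_biUnion]
    · rw [Finset.sum_congr rfl (fun j _ => hBcard j), Finset.sum_const,
        card_filter_fin_lt g M' hM', smul_eq_mul]
    · intro j hj j' hj' hne
      rw [Function.onFun, Finset.disjoint_left]
      intro c hc hc'
      exact hBdisj j j' hne c hc hc'
  have claim1 : ∀ j : Fin g, (j:ℕ) < M → (W ∩ P j).Nonempty := by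
    intro j hj
    by_contra hne
    rw [Finset.not_nonempty_iff_eq_empty] at hne
    have hjm : (j:ℕ) < m := lt_of_lt_of_le hj (min_le_left _ _)
    have hjl : (j:ℕ) * E.l < E.k := hcf.1 j hjm
    set U := (univ.filter fun j' : Fin g => (j':ℕ) < (j:ℕ)).biUnion B with hU
    have hUcard : U.card = (j:ℕ) * E.l := hcardU j (le_of_lt j.isLt)
    obtain ⟨c, hcW, hcU⟩ : ∃ c, c ∈ W ∧ c ∉ U := by
      by_contra h
      push_neg at h
      have hsub : W ⊆ U := fun x hx => h x hx
      have := Finset.card_le_card hsub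
      omega
    obtain ⟨b, hb⟩ : (B j).Nonempty := Finset.card_pos.mp (by rw [hBcard]; exact hl0)
    have hbW : b ∉ W := by
      intro h
      have : b ∈ W ∩ P j := mem_inter.mpr ⟨h, hBsub j hb⟩
      rw [hne] at this
      exact notMem_empty b this
    have hcscore : sLVc E c < nParty E (P j) := by
      by_cases hcB : ∃ j'', c ∈ B j''
      · obtain ⟨j'', hj''⟩ := hcB
        rw [hscore j'' c hj'']
        have h1 : ¬ ((j'':ℕ) < (j:ℕ)) := by
          intro h
          exact hcU (Finset.mem_biUnion.mpr ⟨j'', mem_filter.mpr ⟨mem_univ _, h⟩, hj''⟩)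
        have h2 : j'' ≠ j := by
          intro h
          rw [h] at hj''
          have : c ∈ W ∩ P j := mem_inter.mpr ⟨hcW, hBsub _ hj''⟩
          rw [hne] at this
          exact notMem_empty c this
        have h3 : j < j'' := by
          rw [Fin.lt_def]
          have : (j:ℕ) ≠ (j'':ℕ) := fun h => h2 (Fin.ext h.symm)
          omega
        exact hanti j j'' h3
      · push_neg at hcB
        rw [hscore0 c hcB]
        exact hn1 j
    exact swap_lose E W hWcard hWmax hcW hbW (lt_of_lt_of_eq hcscore (hscore j b hb).symm)
  have claim2 : ∀ j : Fin g, M ≤ (j:ℕ) → W ∩ P j = ∅ := by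
    intro j hj
    have hjg := j.isLt
    have hMm : M = m := by omega
    have hkM : E.k ≤ M * E.l := by rw [hMm]; exact hcf.2
    by_contra hne
    rw [← ne_eq, ← Finset.nonempty_iff_ne_empty] at hne
    obtain ⟨c, hc⟩ := hne
    have hcW := (mem_inter.mp hc).1
    have hcP := (mem_inter.mp hc).2
    set U := (univ.filter fun j' : Fin g => (j':ℕ) < M).biUnion B with hU
    have hUcard : U.card = M * E.l := hcardU M (min_le_right _ _)
    have hscorec : ∀ j' : Fin g, (j':ℕ) < M → ∀ b ∈ B j', sLVc E c < sLVc E b := by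
      intro j' hj' b hb
      rw [hscore j' b hb]
      have hj'j : j' < j := by rw [Fin.lt_def]; omega
      by_cases hcB : ∃ j'', c ∈ B j''
      · obtain ⟨j'', hj''⟩ := hcB
        have hje : j'' = j := by
          by_contra h
          exact Pdisj j'' j h c (hBsub _ hj'') hcP
        rw [hje] at hj''
        rw [hscore j c hj'']
        exact hanti j' j hj'j
      · push_neg at hcB
        rw [hscore0 c hcB]
        exact hn1 j'
    by_cases hUW : U ⊆ W
    · have hWU : W = U := (Finset.eq_of_subset_of_card_le hUW (by omega)).symm
      rw [hWU] at hcW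
      obtain ⟨j', hj', hcB⟩ := Finset.mem_biUnion.mp hcW
      have hj'M := (mem_filter.mp hj').2
      refine Pdisj j' j ?_ c (hBsub _ hcB) hcP
      intro h
      rw [h] at hj'M
      omega
    · rw [Finset.not_subset] at hUW
      obtain ⟨b, hbU, hbW⟩ := hUW
      obtain ⟨j', hj', hbB⟩ := Finset.mem_biUnion.mp hbU
      exact swap_lose E W hWcard hWmax hcW hbW (hscorec j' (mem_filter.mp hj').2 b hbB)
  have hfilter : (univ.filter fun i : V => (W ∩ E.A i).Nonempty) =
      (univ.filter fun j : Fin g => (j:ℕ) < M).biUnion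
        (fun j => univ.filter fun i => E.A i = P j) := by
    ext i
    simp only [mem_filter, mem_univ, true_and, Finset.mem_biUnion]
    constructor
    · intro h
      refine ⟨pt i, ?_, hpt i⟩
      by_contra hlt
      push_neg at hlt
      have h2 := claim2 (pt i) hlt
      rw [hpt i, h2] at h
      exact Finset.not_nonempty_empty h
    · rintro ⟨j, hj, hAi⟩
      rw [hAi]
      exact claim1 j hj
  unfold sCC
  rw [hfilter, Finset.card_biUnion]
  · rfl
  · intro j hj j' hj' hne
    rw [Function.onFun, Finset.disjoint_left]
    intro i h1 h2
    simp only [mem_filter, mem_univ, true_and] at h1 h2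
    exact hne (Pinj (by rw [← h1, ← h2]))
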